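/- (Piecewise linearity of the Lasso path.) Suppose S = XᵀWX is positive definite. Let I ⊆ (0,∞) be an interval and β̂ : I → ℝ^p a map such that for each λ ∈ I, β̂(λ) is a global minimizer of β ↦ L(β,λ), and suppose there is a fixed sign vector s ∈ {−1,1}^p with sign(β̂(λ)_j) = s_j for all λ ∈ I and all j. Then β̂ is affine in λ on I: for all λ₁, λ₂ ∈ I, β̂(λ₂) − β̂(λ₁) = −(λ₂ − λ₁)·S⁻¹ s. -/
import Mathlib


open Matrix BigOperators

/-- The weighted Lasso objective
`L(β,λ) = (1/2)·Σ_i w_i (y_i − X_iᵀβ)² + λ·Σ_j |β_j|`. -/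
noncomputable def lassoObj {p t : ℕ} (X : Matrix (Fin t) (Fin p) ℝ)
    (y w : Fin t → ℝ) (lam : ℝ) (β : Fin p → ℝ) : ℝ :=
  (1 / 2) * ∑ i, w i * (y i - X i ⬝ᵥ β) ^ 2 + lam * ∑ j, |β j|

private lemma aux_quad_zero (a b : ℝ) (hb : 0 ≤ b) (δ : ℝ) (hδ : 0 < δ)
    (h : ∀ ε : ℝ, |ε| < δ → 0 ≤ ε * a + ε ^ 2 * b) : a = 0 := by
  by_contra ha
  have ha' : 0 < |a| := abs_pos.mpr ha
  set ε := -a * min (δ / (|a| + 1)) (1 / (b + 1)) with hε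
  have ht1 : 0 < min (δ / (|a| + 1)) (1 / (b + 1)) := by
    apply lt_min <;> positivity
  have h1 : |ε| < δ := by
    rw [hε, abs_mul, abs_neg]
    have h2 : |min (δ / (|a| + 1)) (1 / (b + 1))| = min (δ / (|a| + 1)) (1 / (b + 1)) :=
      abs_of_pos ht1
    rw [h2]
    calc |a| * min (δ / (|a| + 1)) (1 / (b + 1)) ≤ |a| * (δ / (|a| + 1)) := by
          apply mul_le_mul_of_nonneg_left (min_le_left _ _) (abs_nonneg a)
      _ < δ := by
          have hx : |a| / (|a| + 1) < 1 := (div_lt_one (by positivity)).mpr (by linarith)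
          have : |a| * (δ / (|a| + 1)) = δ * (|a| / (|a| + 1)) := by ring
          rw [this]
          nlinarith
  have h3 := h ε h1
  have h4 : min (δ / (|a| + 1)) (1 / (b + 1)) * b < 1 := by
    calc min (δ / (|a| + 1)) (1 / (b + 1)) * b ≤ (1 / (b + 1)) * b := by
          apply mul_le_mul_of_nonneg_right (min_le_right _ _) hb
      _ < 1 := by rw [div_mul_eq_mul_div, one_mul]; rw [div_lt_one (by positivity)]; linarith
  have : ε * a + ε ^ 2 * b = a ^ 2 * min (δ / (|a| + 1)) (1 / (b + 1)) *
      (min (δ / (|a| + 1)) (1 / (b + 1)) * b - 1) := by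
    rw [hε]; ring
  rw [this] at h3
  have ha2 : 0 < a ^ 2 * min (δ / (|a| + 1)) (1 / (b + 1)) := by positivity
  nlinarith [mul_neg_of_pos_of_neg ha2
    (show min (δ / (|a| + 1)) (1 / (b + 1)) * b - 1 < 0 by linarith)]

private lemma aux_mulVec {p t : ℕ} (X : Matrix (Fin t) (Fin p) ℝ) (w : Fin t → ℝ)
    (β : Fin p → ℝ) (j : Fin p) :
    ((Xᵀ * Matrix.diagonal w * X).mulVec β) j = ∑ i, w i * X i j * (X i ⬝ᵥ β) := by
  simp only [Matrix.mulVec, Matrix.mul_apply, dotProduct, Matrix.transpose_apply,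
    Matrix.diagonal_apply, Finset.sum_mul, Finset.mul_sum]
  rw [Finset.sum_comm]
  apply Finset.sum_congr rfl
  intro i _
  simp only [mul_ite, mul_zero, ite_mul, zero_mul, Finset.sum_ite_eq', Finset.mem_univ, if_true]
  apply Finset.sum_congr rfl
  intro k _
  ring

/-- Piecewise linearity of the Lasso path: on an interval `I ⊆ (0,∞)` where
the Lasso solution has a constant sign vector `s ∈ {−1,1}^p`, the solution
path is affine in `λ`: `β̂(λ₂) − β̂(λ₁) = −(λ₂ − λ₁)·S⁻¹ s`. -/
theorem lasso_path_affine
    {p t : ℕ} (X : Matrix (Fin t) (Fin p) ℝ) (y w : Fin t → ℝ)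
    (hw : ∀ i, 0 < w i)
    (hS : (Xᵀ * Matrix.diagonal w * X).PosDef)
    (I : Set ℝ) (hI : I ⊆ Set.Ioi (0 : ℝ)) (hI' : I.OrdConnected)
    (βhat : ℝ → Fin p → ℝ)
    (hmin : ∀ lam ∈ I,
      ∀ β : Fin p → ℝ, lassoObj X y w lam (βhat lam) ≤ lassoObj X y w lam β)
    (s : Fin p → ℝ) (hs₁ : ∀ j, s j = -1 ∨ s j = 1)
    (hs₂ : ∀ lam ∈ I, ∀ j, Real.sign (βhat lam j) = s j) :
    ∀ lam₁ ∈ I, ∀ lam₂ ∈ I,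
      βhat lam₂ - βhat lam₁
        = -((lam₂ - lam₁) • (Xᵀ * Matrix.diagonal w * X)⁻¹.mulVec s) := by
  set S := Xᵀ * Matrix.diagonal w * X with hSdef
  -- first order condition
  have hkey : ∀ lam ∈ I, ∀ j, (S.mulVec (βhat lam)) j + lam * s j = ∑ i, w i * X i j * y i := by
    intro lam hlam j
    set β := βhat lam with hβ
    have hsign := hs₂ lam hlam j
    have hβj : β j ≠ 0 := by
      intro h0
      rw [hβ] at h0
      rw [h0, Real.sign_zero] at hsign
      rcases hs₁ j with h | h <;> rw [h] at hsign <;> norm_num at hsign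
    set a : ℝ := (∑ i, w i * X i j * (X i ⬝ᵥ β - y i)) + lam * s j with ha
    set b : ℝ := (1/2) * ∑ i, w i * (X i j)^2 with hb
    have hbnn : 0 ≤ b := by
      rw [hb]
      have h : (0:ℝ) ≤ ∑ i, w i * (X i j)^2 :=
        Finset.sum_nonneg fun i _ => mul_nonneg (hw i).le (sq_nonneg _)
      linarith
    have habs : ∀ ε : ℝ, |ε| < |β j| → |β j + ε| = |β j| + ε * s j := by
      intro ε hε
      rcases hs₁ j with h | h <;> rw [← hβ] at hsign
      · have hneg : β j < 0 := by
          rcases lt_trichotomy (β j) 0 with h1 | h1 | h1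
          · exact h1
          · exact absurd h1 hβj
          · rw [Real.sign_of_pos h1, h] at hsign; norm_num at hsign
        rw [abs_of_neg hneg] at hε ⊢
        rw [abs_lt] at hε
        rw [abs_of_neg (by linarith), h]
        ring
      · have hpos : 0 < β j := by
          rcases lt_trichotomy (β j) 0 with h1 | h1 | h1
          · rw [Real.sign_of_neg h1, h] at hsign; norm_num at hsign
          · exact absurd h1 hβj
          · exact h1
        rw [abs_of_pos hpos] at hε ⊢
        rw [abs_lt] at hε
        rw [abs_of_pos (by linarith), h]
        ring
    have hexp : ∀ ε : ℝ, |ε| < |β j| →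
        lassoObj X y w lam (β + ε • (Pi.single j 1 : Fin p → ℝ))
          = lassoObj X y w lam β + (ε * a + ε ^ 2 * b) := by
      intro ε hε
      have hdot : ∀ i, X i ⬝ᵥ (β + ε • (Pi.single j 1 : Fin p → ℝ)) = X i ⬝ᵥ β + ε * X i j := by
        intro i
        rw [dotProduct_add, dotProduct_smul]
        simp [dotProduct, Pi.single_apply, mul_comm]
      have habs2 : ∑ k, |(β + ε • (Pi.single j 1 : Fin p → ℝ)) k| = (∑ k, |β k|) + ε * s j := by
        have h1 : ∑ k, (|(β + ε • (Pi.single j 1 : Fin p → ℝ)) k| - |β k|) = |β j + ε| - |β j| := by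
          rw [Finset.sum_eq_single j]
          · simp
          · intro k _ hk
            simp [Pi.single_apply, hk]
          · simp
        have h2 := Finset.sum_sub_distrib (f := fun k => |(β + ε • (Pi.single j 1 : Fin p → ℝ)) k|)
          (g := fun k => |β k|) (s := Finset.univ)
        rw [h2] at h1
        rw [habs ε hε] at h1
        linarith
      unfold lassoObj
      rw [habs2]
      have hquad : ∑ i, w i * (y i - X i ⬝ᵥ (β + ε • (Pi.single j 1 : Fin p → ℝ))) ^ 2
          = (∑ i, w i * (y i - X i ⬝ᵥ β) ^ 2)
            + ε * (2 * ∑ i, w i * X i j * (X i ⬝ᵥ β - y i))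
            + ε ^ 2 * ∑ i, w i * (X i j) ^ 2 := by
        simp only [Finset.mul_sum, ← Finset.sum_add_distrib]
        apply Finset.sum_congr rfl
        intro i _
        rw [hdot i]
        ring
      rw [hquad, ha, hb]
      ring
    have hmin' : ∀ ε : ℝ, |ε| < |β j| → 0 ≤ ε * a + ε ^ 2 * b := by
      intro ε hε
      have := hmin lam hlam (β + ε • (Pi.single j 1 : Fin p → ℝ))
      rw [hexp ε hε] at this
      linarith
    have ha0 : a = 0 := aux_quad_zero a b hbnn |β j| (abs_pos.mpr hβj) hmin'
    rw [ha] at ha0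
    rw [aux_mulVec]
    have hsplit : ∑ i, w i * X i j * (X i ⬝ᵥ β - y i)
        = (∑ i, w i * X i j * (X i ⬝ᵥ β)) - ∑ i, w i * X i j * y i := by
      rw [← Finset.sum_sub_distrib]
      apply Finset.sum_congr rfl
      intro i _
      ring
    rw [hsplit] at ha0
    linarith
  intro lam₁ h1 lam₂ h2
  have hdet : IsUnit S.det := isUnit_iff_ne_zero.mpr hS.det_pos.ne'
  have hdiff : S.mulVec (βhat lam₂ - βhat lam₁) = (lam₁ - lam₂) • s := by
    funext j
    rw [mulVec_sub]
    have e1 := hkey lam₁ h1 j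
    have e2 := hkey lam₂ h2 j
    simp only [Pi.sub_apply, Pi.smul_apply, smul_eq_mul]
    linarith
  have : βhat lam₂ - βhat lam₁ = S⁻¹.mulVec ((lam₁ - lam₂) • s) := by
    rw [← hdiff, Matrix.mulVec_mulVec, Matrix.nonsing_inv_mul S hdet, Matrix.one_mulVec]
  rw [this, Matrix.mulVec_smul]
  funext j
  simp
  ring
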